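/- Let λ, ξ, σ, M be positive real numbers and let 0 < ρ < 1. Define d = λπ²ρ/(4Mσ), κ = λ²π⁴/(8M²σ²), and E = (λ·π^{3/2}·ρ(1-ρ)/(2·√(ξσ²))) · exp(d²) · (2/√π) · ∫_d^∞ exp(-t²) dt. Then (2/π)·(M(1-ρ)/√ξ)·(κρ²/(1+κρ²)) < E < (2/π)·(M(1-ρ)/√ξ). -/

import Mathlib

open MeasureTheory Set Filter Real

lemma expsq_tendsto : Tendsto (fun t : ℝ => Real.exp (-t ^ 2)) atTop (nhds 0) :=
  Real.tendsto_exp_atBot.comp (tendsto_neg_atBot_iff.mpr (tendsto_pow_atTop two_ne_zero))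

lemma expsq_int (d : ℝ) : IntegrableOn (fun t : ℝ => Real.exp (-t ^ 2)) (Set.Ioi d) := by
  have h := integrable_exp_neg_mul_sq (b := 1) one_pos
  simpa using h.integrableOn

lemma tail_pos_aux {d : ℝ} {f : ℝ → ℝ} (hf : ∀ t ∈ Set.Ioi d, 0 < f t)
    (hint : IntegrableOn f (Set.Ioi d)) : 0 < ∫ t in Set.Ioi d, f t := by
  rw [setIntegral_pos_iff_support_of_nonneg_ae]
  · refine lt_of_lt_of_le ?_ (measure_mono (fun x hx => ⟨(hf x hx).ne', hx⟩))
    simp [Real.volume_Ioi]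
  · filter_upwards [ae_restrict_mem measurableSet_Ioi] with t ht using (hf t ht).le
  · exact hint

lemma tail_upper {d : ℝ} (hd : 0 < d) :
    ∫ t in Set.Ioi d, Real.exp (-t ^ 2) < Real.exp (-d ^ 2) / (2 * d) := by
  set g : ℝ → ℝ := fun t => Real.exp (-t ^ 2) + Real.exp (-t ^ 2) / (2 * t ^ 2) with hg
  have hderiv : ∀ t ∈ Set.Ici d, HasDerivAt (fun t => -Real.exp (-t ^ 2) / (2 * t)) (g t) t := by
    intro t ht
    have ht0 : t ≠ 0 := (lt_of_lt_of_le hd ht).ne'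
    have h1 : HasDerivAt (fun t : ℝ => -t ^ 2) (-(2 * t)) t := by
      simpa using (hasDerivAt_pow 2 t).fun_neg
    have h2 := h1.exp
    have h3 : HasDerivAt (fun t : ℝ => 2 * t) 2 t := by
      simpa using (hasDerivAt_id t).const_mul 2
    have h4 := (h2.fun_neg).fun_div h3 (by positivity)
    refine h4.congr_deriv ?_
    rw [hg]
    field_simp [hg]
    ring
  have hextra_int : IntegrableOn (fun t : ℝ => Real.exp (-t ^ 2) / (2 * t ^ 2)) (Set.Ioi d) := by
    refine Integrable.mono' ((expsq_int d).const_mul ((2 * d ^ 2)⁻¹)) ?_ ?_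
    · exact ((Real.measurable_exp.comp ((measurable_id.pow_const 2).neg)).div
        ((measurable_id.pow_const 2).const_mul 2)).aestronglyMeasurable
    · filter_upwards [ae_restrict_mem measurableSet_Ioi] with t ht
      have htd : d < t := ht
      have ht0 : 0 < t := hd.trans htd
      have h2 : 2 * d ^ 2 ≤ 2 * t ^ 2 := by nlinarith
      rw [Real.norm_eq_abs, abs_of_nonneg (by positivity)]
      rw [div_le_iff₀ (by positivity), inv_mul_eq_div, div_mul_eq_mul_div, le_div_iff₀ (by positivity)]
      nlinarith [Real.exp_pos (-t ^ 2)]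
  have hg_int : IntegrableOn g (Set.Ioi d) := (expsq_int d).add hextra_int
  have htend : Tendsto (fun t : ℝ => -Real.exp (-t ^ 2) / (2 * t)) atTop (nhds 0) := by
    apply squeeze_zero_norm' (a := fun t : ℝ => Real.exp (-t ^ 2)) _ expsq_tendsto
    filter_upwards [eventually_ge_atTop (1 : ℝ)] with t ht
    rw [Real.norm_eq_abs, abs_div, abs_neg, abs_of_nonneg (Real.exp_pos _).le,
      abs_of_nonneg (by linarith)]
    rw [div_le_iff₀ (by linarith)]
    nlinarith [Real.exp_pos (-t ^ 2)]
  have hFTC := integral_Ioi_of_hasDerivAt_of_tendsto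
    ((hderiv d (mem_Ici.mpr le_rfl)).continuousAt.continuousWithinAt)
    (fun x hx => hderiv x (mem_Ici.mpr (le_of_lt hx))) hg_int htend
  have heq : ∫ t in Set.Ioi d, g t = Real.exp (-d ^ 2) / (2 * d) := by
    rw [hFTC]; field_simp; ring
  have hsplit : ∫ t in Set.Ioi d, g t =
      (∫ t in Set.Ioi d, Real.exp (-t ^ 2)) + ∫ t in Set.Ioi d, Real.exp (-t ^ 2) / (2 * t ^ 2) :=
    integral_add (expsq_int d) hextra_int
  have hpos : 0 < ∫ t in Set.Ioi d, Real.exp (-t ^ 2) / (2 * t ^ 2) := by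
    apply tail_pos_aux _ hextra_int
    intro t ht
    have ht0 : 0 < t := hd.trans ht
    positivity
  linarith [heq ▸ hsplit]

lemma tail_lower {d : ℝ} (hd : 0 < d) :
    d * Real.exp (-d ^ 2) / (2 * d ^ 2 + 1) < ∫ t in Set.Ioi d, Real.exp (-t ^ 2) := by
  set h : ℝ → ℝ := fun t => Real.exp (-t ^ 2) * (4 * t ^ 4 + 4 * t ^ 2 - 1) / (2 * t ^ 2 + 1) ^ 2
    with hh
  have hq : ∀ t : ℝ, (0:ℝ) < 2 * t ^ 2 + 1 := fun t => by positivity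
  have hderiv : ∀ t : ℝ,
      HasDerivAt (fun t => -(t * Real.exp (-t ^ 2) / (2 * t ^ 2 + 1))) (h t) t := by
    intro t
    have h1 : HasDerivAt (fun t : ℝ => -t ^ 2) (-(2 * t)) t := by
      simpa using (hasDerivAt_pow 2 t).fun_neg
    have h2 := (hasDerivAt_id' t).fun_mul h1.exp
    have h3 : HasDerivAt (fun t : ℝ => 2 * t ^ 2 + 1) (4 * t) t := by
      have h := ((hasDerivAt_pow 2 t).const_mul 2).add_const 1
      refine h.congr_deriv ?_
      norm_num
      ring
    have h4 := (h2.fun_div h3 (hq t).ne').fun_neg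
    refine h4.congr_deriv ?_
    have := (hq t).ne'
    rw [hh]
    field_simp [hh]
    ring
  have hh_int : IntegrableOn h (Set.Ioi d) := by
    refine Integrable.mono' (expsq_int d) ?_ ?_
    · apply Measurable.aestronglyMeasurable
      apply Measurable.div
      · exact (Real.measurable_exp.comp ((measurable_id.pow_const 2).neg)).mul (by fun_prop)
      · fun_prop
    · filter_upwards with t
      rw [Real.norm_eq_abs, abs_div, abs_of_pos (pow_pos (hq t) 2), abs_mul,
        abs_of_nonneg (Real.exp_pos _).le, div_le_iff₀ (pow_pos (hq t) 2)]
      have h5 : |4 * t ^ 4 + 4 * t ^ 2 - 1| ≤ (2 * t ^ 2 + 1) ^ 2 := by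
        rw [abs_le]; constructor <;> nlinarith [sq_nonneg t, sq_nonneg (t^2)]
      calc Real.exp (-t ^ 2) * |4 * t ^ 4 + 4 * t ^ 2 - 1|
          ≤ Real.exp (-t ^ 2) * (2 * t ^ 2 + 1) ^ 2 := by
            exact mul_le_mul_of_nonneg_left h5 (Real.exp_pos _).le
        _ = _ := by ring
  have htend : Tendsto (fun t : ℝ => -(t * Real.exp (-t ^ 2) / (2 * t ^ 2 + 1))) atTop (nhds 0) := by
    apply squeeze_zero_norm' (a := fun t : ℝ => Real.exp (-t ^ 2)) _ expsq_tendsto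
    filter_upwards [eventually_ge_atTop (0 : ℝ)] with t ht
    rw [Real.norm_eq_abs, abs_neg, abs_div, abs_of_pos (hq t), abs_mul,
      abs_of_nonneg ht, abs_of_nonneg (Real.exp_pos _).le, div_le_iff₀ (hq t)]
    nlinarith [Real.exp_pos (-t ^ 2), sq_nonneg (t - 1)]
  have hFTC := integral_Ioi_of_hasDerivAt_of_tendsto
    ((hderiv d).continuousAt.continuousWithinAt)
    (fun x _ => hderiv x) hh_int htend
  have heq : ∫ t in Set.Ioi d, h t = d * Real.exp (-d ^ 2) / (2 * d ^ 2 + 1) := by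
    rw [hFTC]; ring
  have hdiff : ∀ t ∈ Set.Ioi d, 0 < Real.exp (-t ^ 2) - h t := by
    intro t _
    have h5 : h t < Real.exp (-t ^ 2) := by
      rw [hh]
      rw [div_lt_iff₀ (pow_pos (hq t) 2)]
      nlinarith [Real.exp_pos (-t ^ 2), sq_nonneg t, sq_nonneg (t ^ 2)]
    linarith
  have hpos : 0 < ∫ t in Set.Ioi d, (Real.exp (-t ^ 2) - h t) :=
    tail_pos_aux hdiff ((expsq_int d).sub hh_int)
  have hsub := integral_sub (expsq_int d) hh_int
  rw [hsub] at hpos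
  linarith [heq ▸ hpos]


theorem stmt_11 (lam ξ σ M ρ d κ E : ℝ)
    (hlam : 0 < lam) (hξ : 0 < ξ) (hσ : 0 < σ) (hM : 0 < M)
    (hρ0 : 0 < ρ) (hρ1 : ρ < 1)
    (hd : d = lam * Real.pi ^ 2 * ρ / (4 * M * σ))
    (hκ : κ = lam ^ 2 * Real.pi ^ 4 / (8 * M ^ 2 * σ ^ 2))
    (hE : E = (lam * Real.pi ^ ((3 : ℝ) / 2) * ρ * (1 - ρ)
          / (2 * Real.sqrt (ξ * σ ^ 2))) * Real.exp (d ^ 2) *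
        ((2 / Real.sqrt Real.pi) * ∫ t in Set.Ioi d, Real.exp (-t ^ 2))) :
    (2 / Real.pi) * (M * (1 - ρ) / Real.sqrt ξ) * (κ * ρ ^ 2 / (1 + κ * ρ ^ 2)) < E ∧
    E < (2 / Real.pi) * (M * (1 - ρ) / Real.sqrt ξ) := by
  have hπ : (0:ℝ) < Real.pi := Real.pi_pos
  have hsπ : 0 < Real.sqrt Real.pi := Real.sqrt_pos.mpr hπ
  have hsξ : 0 < Real.sqrt ξ := Real.sqrt_pos.mpr hξ
  have hd0 : 0 < d := by rw [hd]; positivity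
  have h32 : Real.pi ^ ((3:ℝ)/2) = Real.pi * Real.sqrt Real.pi := by
    rw [show (3:ℝ)/2 = 1 + 1/2 by norm_num, Real.rpow_add hπ, Real.rpow_one,
      ← Real.sqrt_eq_rpow]
  have hsq : Real.sqrt (ξ * σ ^ 2) = Real.sqrt ξ * σ := by
    rw [Real.sqrt_mul hξ.le, Real.sqrt_sq hσ.le]
  set I := ∫ t in Set.Ioi d, Real.exp (-t ^ 2) with hI
  set e := Real.exp (d ^ 2) with he
  have he0 : 0 < e := Real.exp_pos _
  have hexpneg : Real.exp (-d ^ 2) = e⁻¹ := by rw [he, ← Real.exp_neg]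
  set K := lam * Real.pi * ρ * (1 - ρ) * e / (Real.sqrt ξ * σ) with hKdef
  have hK0 : 0 < K := by
    rw [hKdef]; have : 0 < 1 - ρ := by linarith
    positivity
  have hEK : E = K * I := by
    rw [hE, h32, hsq, hKdef]
    field_simp
  have hρ2 : (0:ℝ) < 1 - ρ := by linarith
  have hκρ : κ * ρ ^ 2 = 2 * d ^ 2 := by
    rw [hκ, hd]; field_simp; ring
  constructor
  · have h1 : K * (d * Real.exp (-d ^ 2) / (2 * d ^ 2 + 1)) < K * I :=
      mul_lt_mul_of_pos_left (tail_lower hd0) hK0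
    have h2 : K * (d * Real.exp (-d ^ 2) / (2 * d ^ 2 + 1)) =
        (2 / Real.pi) * (M * (1 - ρ) / Real.sqrt ξ) * (κ * ρ ^ 2 / (1 + κ * ρ ^ 2)) := by
      rw [hexpneg, hκρ, hKdef, hd]
      have hq : (0:ℝ) < 2 * (lam * Real.pi ^ 2 * ρ / (4 * M * σ)) ^ 2 + 1 := by positivity
      field_simp
      ring
    rw [hEK, ← h2]; exact h1
  · have h1 : K * I < K * (Real.exp (-d ^ 2) / (2 * d)) :=
      mul_lt_mul_of_pos_left (tail_upper hd0) hK0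
    have h2 : K * (Real.exp (-d ^ 2) / (2 * d)) =
        (2 / Real.pi) * (M * (1 - ρ) / Real.sqrt ξ) := by
      rw [hexpneg, hKdef, hd]
      field_simp
      ring
    rw [hEK, ← h2]; exact h1
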